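/- Let φ : ℝ → ℝ be nonnegative, continuous, with φ(0)=1, ξ²+φ(ξ)>0 everywhere, and φ(ξ) ≤ C(1+ξ²)^{-N} for all N (rapid decay). Then for each real λ > 0 the difference ∫_{|ξ|≥1} (ξ²+φ(ξ))^{-(λ+1)/2} dξ − ∫_{|ξ|≥1} |ξ|^{-λ-1} dξ remains bounded as λ → 0⁺. -/

import Mathlib

open MeasureTheory Filter Set

lemma aux_int {a : ℝ} (ha : a < -1) :
    IntegrableOn (fun x : ℝ => |x| ^ a) {x : ℝ | 1 ≤ |x|} := by
  have hIoi : IntegrableOn (fun x : ℝ => x ^ a) (Ioi 1) :=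
    integrableOn_Ioi_rpow_of_lt ha one_pos
  have hIci : IntegrableOn (fun x : ℝ => |x| ^ a) (Ici 1) := by
    rw [integrableOn_Ici_iff_integrableOn_Ioi]
    exact hIoi.congr_fun (fun x hx => by rw [abs_of_pos (lt_trans one_pos hx)]) measurableSet_Ioi
  have hIic : IntegrableOn (fun x : ℝ => |x| ^ a) (Iic (-1)) := by
    have := ((Measure.measurePreserving_neg (volume : Measure ℝ)).integrableOn_comp_preimage
      (Homeomorph.neg ℝ).measurableEmbedding).2 hIci
    have heq : (Neg.neg ⁻¹' (Ici (1:ℝ))) = Iic (-1) := by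
      ext x; simp [le_neg]
    rw [heq] at this
    exact this.congr_fun (fun x hx => by simp [Function.comp]) measurableSet_Iic
  have hS : {x : ℝ | 1 ≤ |x|} = Iic (-1) ∪ Ici 1 := by
    ext x
    rw [mem_setOf_eq, le_abs]
    constructor
    · rintro (h | h)
      · exact Or.inr h
      · exact Or.inl (by simpa [le_neg] using h)
    · rintro (h | h)
      · exact Or.inr (by simpa [le_neg] using h)
      · exact Or.inl h
  rw [hS]
  exact hIic.union hIci

theorem stmt7 (φ : ℝ → ℝ) (hcont : Continuous φ) (hnn : ∀ ξ, 0 ≤ φ ξ) (h0 : φ 0 = 1)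
    (hpos : ∀ ξ : ℝ, 0 < ξ ^ 2 + φ ξ)
    (hdecay : ∀ N : ℕ, ∃ C : ℝ, ∀ ξ : ℝ, φ ξ ≤ C * (1 + ξ ^ 2) ^ (-(N : ℝ))) :
    ∃ M : ℝ, ∀ᶠ lam in nhdsWithin (0 : ℝ) (Set.Ioi 0),
      |(∫ ξ in {x : ℝ | 1 ≤ |x|}, (ξ ^ 2 + φ ξ) ^ (-(lam + 1) / 2)) -
        ∫ ξ in {x : ℝ | 1 ≤ |x|}, |ξ| ^ (-lam - 1)| ≤ M := by
  obtain ⟨C, hC⟩ := hdecay 1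
  have hC1 : (1:ℝ) ≤ C := by
    have := hC 0
    rw [h0] at this
    simpa using this
  set S : Set ℝ := {x : ℝ | 1 ≤ |x|} with hSdef
  have hSm : MeasurableSet S := measurableSet_le measurable_const continuous_abs.measurable
  have hbound_int : IntegrableOn (fun ξ : ℝ => C * |ξ| ^ (-4:ℝ)) S :=
    (aux_int (by norm_num)).const_mul C
  refine ⟨∫ ξ in S, C * |ξ| ^ (-4:ℝ), ?_⟩
  filter_upwards [Ioo_mem_nhdsGT_of_mem (by constructor <;> norm_num : (0:ℝ) ∈ Ico 0 1)]
    with lam hlam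
  obtain ⟨hl0, hl1⟩ := hlam
  have hint_g : IntegrableOn (fun ξ : ℝ => |ξ| ^ (-lam - 1)) S := aux_int (by linarith)
  have hfc : Continuous (fun ξ : ℝ => (ξ ^ 2 + φ ξ) ^ (-(lam + 1) / 2)) := by
    apply Continuous.rpow_const ((continuous_pow 2).add hcont)
    intro x; exact Or.inl (hpos x).ne'
  -- key pointwise estimates on S
  have key : ∀ ξ : ℝ, ξ ∈ S →
      (ξ ^ 2 + φ ξ) ^ (-(lam + 1) / 2) ≤ |ξ| ^ (-lam - 1) ∧
      |ξ| ^ (-lam - 1) - (ξ ^ 2 + φ ξ) ^ (-(lam + 1) / 2) ≤ C * |ξ| ^ (-4:ℝ) := by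
    intro ξ hξ
    have habs : 1 ≤ |ξ| := hξ
    have hb1 : 1 ≤ ξ ^ 2 := by nlinarith [sq_abs ξ]
    have hb0 : (0:ℝ) < ξ ^ 2 := by linarith
    have hab : ξ ^ 2 ≤ ξ ^ 2 + φ ξ := by linarith [hnn ξ]
    have ha0 : (0:ℝ) < ξ ^ 2 + φ ξ := hpos ξ
    have hexp : -(lam + 1) / 2 = -((lam + 1) / 2) := by ring
    have hs0 : (0:ℝ) < (lam + 1) / 2 := by linarith
    have hs1 : (lam + 1) / 2 ≤ 1 := by linarith
    have hg_eq : |ξ| ^ (-lam - 1) = (ξ ^ 2) ^ (-(lam + 1) / 2) := by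
      rw [← sq_abs ξ, ← Real.rpow_natCast |ξ| 2, ← Real.rpow_mul (abs_nonneg ξ)]
      congr 1
      push_cast
      ring
    have hfg : (ξ ^ 2 + φ ξ) ^ (-(lam + 1) / 2) ≤ (ξ ^ 2) ^ (-(lam + 1) / 2) :=
      Real.rpow_le_rpow_of_nonpos hb0 hab (by linarith)
    constructor
    · rw [hg_eq]; exact hfg
    · -- main estimate
      set s := (lam + 1) / 2 with hs
      have hq0 : (0:ℝ) < ξ ^ 2 / (ξ ^ 2 + φ ξ) := div_pos hb0 ha0
      have hq1 : ξ ^ 2 / (ξ ^ 2 + φ ξ) ≤ 1 := (div_le_one ha0).2 hab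
      have h2 : ξ ^ 2 / (ξ ^ 2 + φ ξ) ≤ (ξ ^ 2 / (ξ ^ 2 + φ ξ)) ^ s := by
        calc ξ ^ 2 / (ξ ^ 2 + φ ξ) = (ξ ^ 2 / (ξ ^ 2 + φ ξ)) ^ (1:ℝ) :=
              (Real.rpow_one _).symm
          _ ≤ _ := Real.rpow_le_rpow_of_exponent_ge hq0 hq1 hs1
      have hq1' : (ξ ^ 2 / (ξ ^ 2 + φ ξ)) ^ s ≤ 1 := Real.rpow_le_one hq0.le hq1 hs0.le
      have hfactor : (ξ ^ 2 + φ ξ) ^ (-s) = (ξ ^ 2) ^ (-s) * (ξ ^ 2 / (ξ ^ 2 + φ ξ)) ^ s := by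
        rw [Real.div_rpow hb0.le ha0.le, Real.rpow_neg hb0.le, Real.rpow_neg ha0.le]
        have hbs : (0:ℝ) < (ξ ^ 2) ^ s := Real.rpow_pos_of_pos hb0 s
        have has : (0:ℝ) < (ξ ^ 2 + φ ξ) ^ s := Real.rpow_pos_of_pos ha0 s
        field_simp
      have hb_le1 : (ξ ^ 2) ^ (-s) ≤ 1 :=
        Real.rpow_le_one_of_one_le_of_nonpos hb1 (by linarith)
      have hb_nn : (0:ℝ) ≤ (ξ ^ 2) ^ (-s) := Real.rpow_nonneg hb0.le _
      have step1 : |ξ| ^ (-lam - 1) - (ξ ^ 2 + φ ξ) ^ (-(lam + 1) / 2)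
          ≤ φ ξ / (ξ ^ 2 + φ ξ) := by
        rw [hg_eq, hexp, hfactor]
        have heq1 : (ξ ^ 2) ^ (-((lam+1)/2)) - (ξ ^ 2) ^ (-s) * (ξ ^ 2 / (ξ ^ 2 + φ ξ)) ^ s
            = (ξ ^ 2) ^ (-s) * (1 - (ξ ^ 2 / (ξ ^ 2 + φ ξ)) ^ s) := by
          rw [hs]; ring
        rw [heq1]
        have heq2 : φ ξ / (ξ ^ 2 + φ ξ) = 1 - ξ ^ 2 / (ξ ^ 2 + φ ξ) := by
          field_simp
          ring
        rw [heq2]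
        calc (ξ ^ 2) ^ (-s) * (1 - (ξ ^ 2 / (ξ ^ 2 + φ ξ)) ^ s)
            ≤ 1 * (1 - (ξ ^ 2 / (ξ ^ 2 + φ ξ)) ^ s) := by
              apply mul_le_mul_of_nonneg_right hb_le1 (by linarith)
          _ = 1 - (ξ ^ 2 / (ξ ^ 2 + φ ξ)) ^ s := one_mul _
          _ ≤ 1 - ξ ^ 2 / (ξ ^ 2 + φ ξ) := by linarith
      have step2 : φ ξ / (ξ ^ 2 + φ ξ) ≤ φ ξ / ξ ^ 2 := by
        gcongr
        exact hnn ξ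
      have hφ : φ ξ ≤ C * (1 + ξ ^ 2)⁻¹ := by
        have := hC ξ
        rwa [show (-((1:ℕ):ℝ)) = -1 by norm_num, Real.rpow_neg_one] at this
      have step3 : φ ξ / ξ ^ 2 ≤ C * |ξ| ^ (-4:ℝ) := by
        have h4 : C * |ξ| ^ (-4:ℝ) = C * (ξ ^ 2 * ξ ^ 2)⁻¹ := by
          rw [show (-4:ℝ) = -((4:ℕ):ℝ) by norm_num, Real.rpow_neg (abs_nonneg ξ),
            Real.rpow_natCast]
          congr 2
          rw [show |ξ| ^ 4 = (|ξ| ^ 2) ^ 2 by ring, sq_abs]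
          ring
        rw [h4, div_le_iff₀ hb0]
        have hinv : (1 + ξ ^ 2)⁻¹ ≤ (ξ ^ 2)⁻¹ := by
          gcongr <;> linarith
        have heq3 : C * (ξ ^ 2 * ξ ^ 2)⁻¹ * ξ ^ 2 = C * (ξ ^ 2)⁻¹ := by
          field_simp
        rw [heq3]
        calc φ ξ ≤ C * (1 + ξ ^ 2)⁻¹ := hφ
          _ ≤ C * (ξ ^ 2)⁻¹ := by
            apply mul_le_mul_of_nonneg_left hinv (by linarith)
      linarith
  -- integrability of f
  have hint_f : IntegrableOn (fun ξ : ℝ => (ξ ^ 2 + φ ξ) ^ (-(lam + 1) / 2)) S := by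
    apply Integrable.mono hint_g (hfc.aestronglyMeasurable.restrict)
    rw [ae_restrict_iff' hSm]
    filter_upwards with ξ hξ
    rw [Real.norm_eq_abs, Real.norm_eq_abs,
      abs_of_nonneg (Real.rpow_nonneg (hpos ξ).le _),
      abs_of_nonneg (Real.rpow_nonneg (abs_nonneg ξ) _)]
    exact (key ξ hξ).1
  rw [← integral_sub hint_f hint_g]
  calc |∫ ξ in S, ((ξ ^ 2 + φ ξ) ^ (-(lam + 1) / 2) - |ξ| ^ (-lam - 1))|
      ≤ ∫ ξ in S, |(ξ ^ 2 + φ ξ) ^ (-(lam + 1) / 2) - |ξ| ^ (-lam - 1)| :=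
      by simpa [Real.norm_eq_abs] using
        norm_integral_le_integral_norm (μ := volume.restrict S)
          (fun ξ => (ξ ^ 2 + φ ξ) ^ (-(lam + 1) / 2) - |ξ| ^ (-lam - 1))
    _ ≤ ∫ ξ in S, C * |ξ| ^ (-4:ℝ) := by
        apply integral_mono_ae ((hint_f.sub hint_g).abs) hbound_int
        rw [EventuallyLE, ae_restrict_iff' hSm]
        filter_upwards with ξ hξ
        simp only [Pi.sub_apply]
        rw [abs_sub_comm, abs_of_nonneg (sub_nonneg.2 (key ξ hξ).1)]
        exact (key ξ hξ).2
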